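/- arXiv:math/0509721 — 2 statements merged into one kernel-verified Lean document; each statement's English description precedes it below -/
import Mathlib

section
/- Let S be a transient random walk on ℤ^d started at 0 (i.e. q := P₀(T₀ < ∞) < 1, where T₀ = inf{n ≥ 1 : S_n = 0}), with local time l_n(0) at the origin. Then for every y > 0, P₀(∑_{x} l_n(x)² ≥ n y) ≥ (P₀(T₀ ≤ n/√(ny)) )^{√(ny)}, where the exponent √(ny) denotes ⌈√(ny)⌉ appropriately; in particular, lim inf_{n→∞} n^{-1/2} log P₀(∑_x l_n(x)² ≥ ny) ≥ √y · log P₀(T₀ < ∞). -/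
open MeasureTheory ProbabilityTheory Filter


section SiltAux

variable {Ω : Type*} [MeasurableSpace Ω] {V : Type*} [MeasurableSpace V]
  [AddCommGroup V] [MeasurableSub₂ V] [MeasurableSingletonClass V]
  {μ : Measure Ω} [IsProbabilityMeasure μ]

/-- block of increments -/
def blk (X : ℕ → Ω → V) (j L : ℕ) : Ω → (Fin L → V) := fun ω i => X (j + i) ω

lemma blk_measurable {X : ℕ → Ω → V} (hX : ∀ k, Measurable (X k)) (j L : ℕ) :
    Measurable (blk X j L) :=
  measurable_pi_lambda _ fun i => hX (j + i)

lemma blk_law {X : ℕ → Ω → V} (hX : ∀ k, Measurable (X k))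
    (hindep : iIndepFun X μ)
    (hident : ∀ k, IdentDistrib (X k) (X 0) μ μ) (j L : ℕ) :
    Measure.map (blk X j L) μ = Measure.pi (fun _ : Fin L => Measure.map (X 0) μ) := by
  haveI : IsProbabilityMeasure (Measure.map (X 0) μ) :=
    Measure.isProbabilityMeasure_map (hX 0).aemeasurable
  refine (Measure.pi_eq fun s hs => ?_).symm
  rw [Measure.map_apply (blk_measurable hX j L) (MeasurableSet.univ_pi hs)]
  classical
  set sets : ℕ → Set V := fun k => if h : j ≤ k ∧ k - j < L then s ⟨k - j, h.2⟩ else Set.univ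
    with hsets
  have hsets_meas : ∀ k, MeasurableSet (sets k) := by
    intro k
    by_cases h : j ≤ k ∧ k - j < L
    · simp only [hsets, dif_pos h]; exact hs _
    · simp only [hsets, dif_neg h]; exact MeasurableSet.univ
  have hpre : blk X j L ⁻¹' Set.pi Set.univ s
      = ⋂ k ∈ (Finset.range L).map (addLeftEmbedding j), X k ⁻¹' sets k := by
    ext ω
    simp only [Set.mem_preimage, Set.mem_pi, Set.mem_univ, forall_true_left, Set.mem_iInter,
      Finset.mem_map, Finset.mem_range, addLeftEmbedding_apply]
    constructor
    · rintro h k ⟨i, hi, rfl⟩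
      have h1 : j ≤ j + i ∧ (j + i) - j < L := by omega
      simp only [hsets, dif_pos h1, Nat.add_sub_cancel_left]
      exact h ⟨i, hi⟩
    · intro h i
      have := h (j + i) ⟨i, i.isLt, rfl⟩
      have h1 : j ≤ j + i ∧ (j + i) - j < L := ⟨Nat.le_add_right _ _, by omega⟩
      simp only [hsets, dif_pos h1, Nat.add_sub_cancel_left] at this
      exact this
  rw [hpre, hindep.measure_inter_preimage_eq_mul _ (fun k _ => hsets_meas k),
    Finset.prod_map]
  rw [← Fin.prod_univ_eq_prod_range
    (fun i => μ (X (addLeftEmbedding j i) ⁻¹' sets (addLeftEmbedding j i)))]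
  refine Finset.prod_congr rfl fun i _ => ?_
  have h1 : j ≤ j + (i : ℕ) ∧ (j + (i : ℕ)) - j < L := ⟨Nat.le_add_right _ _, by omega⟩
  have hsets_eq : sets (addLeftEmbedding j i) = s i := by
    simp only [addLeftEmbedding_apply, hsets, dif_pos h1, Nat.add_sub_cancel_left]
  rw [hsets_eq, Measure.map_apply (hX 0) (hs i)]
  exact (hident (j + (i : ℕ))).measure_mem_eq (hs i)

end SiltAux

section SiltAux2
set_option linter.unusedSectionVars false

variable {Ω : Type*} [MeasurableSpace Ω] {V : Type*} [MeasurableSpace V]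
  [AddCommGroup V] [MeasurableSub₂ V] [MeasurableAdd₂ V] [MeasurableSingletonClass V]
  {μ : Measure Ω} [IsProbabilityMeasure μ]

lemma blk_measure_preimage_eq {X : ℕ → Ω → V} (hX : ∀ k, Measurable (X k))
    (hindep : iIndepFun X μ)
    (hident : ∀ k, IdentDistrib (X k) (X 0) μ μ) (j L : ℕ)
    {C : Set (Fin L → V)} (hC : MeasurableSet C) :
    μ (blk X j L ⁻¹' C) = μ (blk X 0 L ⁻¹' C) := by
  have hid : IdentDistrib (blk X j L) (blk X 0 L) μ μ :=
    ⟨(blk_measurable hX j L).aemeasurable, (blk_measurable hX 0 L).aemeasurable,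
      by rw [blk_law hX hindep hident j L, blk_law hX hindep hident 0 L]⟩
  exact hid.measure_mem_eq hC

/-- the recursive event "m returns to the start, each within time t", on increment sequences -/
def Cseq (t : ℕ) : ℕ → Set (ℕ → V)
  | 0 => Set.univ
  | (m+1) => ⋃ k ∈ Finset.Icc 1 t,
      {x : ℕ → V | (∑ i ∈ Finset.range k, x i) = 0 ∧ (fun i => x (k + i)) ∈ Cseq t m}

lemma Cseq_measurableSet (t : ℕ) : ∀ m, MeasurableSet (Cseq t m : Set (ℕ → V))
  | 0 => MeasurableSet.univ
  | (m+1) => by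
    refine MeasurableSet.biUnion (Finset.countable_toSet _) fun k _ => ?_
    have h1 : MeasurableSet {x : ℕ → V | (∑ i ∈ Finset.range k, x i) = 0} := by
      have : Measurable fun x : ℕ → V => ∑ i ∈ Finset.range k, x i :=
        Finset.measurable_sum _ fun i _ => measurable_pi_apply i
      exact this (measurableSet_eq (a := (0 : V)))
    have h2 : MeasurableSet {x : ℕ → V | (fun i => x (k + i)) ∈ Cseq t m} := by
      have hshift : Measurable fun (x : ℕ → V) (i : ℕ) => x (k + i) :=
        measurable_pi_lambda _ fun i => measurable_pi_apply (k + i)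
      exact hshift (Cseq_measurableSet t m)
    exact h1.inter h2

lemma Cseq_agree (t : ℕ) : ∀ m (x x' : ℕ → V), (∀ i, i < m * t → x i = x' i) →
    (x ∈ Cseq t m ↔ x' ∈ Cseq t m) := by
  intro m
  induction m with
  | zero => intro x x' _; simp [Cseq]
  | succ m ih =>
    have main : ∀ (x x' : ℕ → V), (∀ i, i < (m+1) * t → x i = x' i) →
        x ∈ Cseq t (m+1) → x' ∈ Cseq t (m+1) := by
      intro x x' hagree hx
      simp only [Cseq, Set.mem_iUnion, Set.mem_setOf_eq, Finset.mem_Icc] at hx ⊢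
      obtain ⟨k, hk, hsum, hshift⟩ := hx
      have ht : t ≤ (m+1) * t := Nat.le_mul_of_pos_left t (Nat.succ_pos m)
      refine ⟨k, hk, ?_, ?_⟩
      · rw [← hsum]
        refine (Finset.sum_congr rfl fun i hi => ?_).symm
        rw [Finset.mem_range] at hi
        exact hagree i (by omega)
      · refine (ih _ _ fun i hi => ?_).mp hshift
        have : (m+1) * t = m * t + t := Nat.succ_mul m t
        exact hagree (k + i) (by omega)
    intro x x' h
    exact ⟨main x x' h, main x' x fun i hi => (h i hi).symm⟩

/-- the recursive return event on Ω, started from time j -/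
def Rset (S : ℕ → Ω → V) (t : ℕ) : ℕ → ℕ → Set Ω
  | 0, _ => Set.univ
  | (m+1), j => ⋃ k ∈ Finset.Icc 1 t, ({ω | S (j+k) ω = S j ω} ∩ Rset S t m (j+k))

def Xinc (S : ℕ → Ω → V) : ℕ → Ω → V := fun k ω => S (k+1) ω - S k ω

lemma sum_Xinc (S : ℕ → Ω → V) (j k : ℕ) (ω : Ω) :
    ∑ i ∈ Finset.range k, Xinc S (j+i) ω = S (j+k) ω - S j ω := by
  exact Finset.sum_range_sub (f := fun i => S (j+i) ω) k

lemma Rset_eq (S : ℕ → Ω → V) (t : ℕ) : ∀ m j,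
    Rset S t m j = (fun ω (i : ℕ) => Xinc S (j+i) ω) ⁻¹' Cseq t m := by
  intro m
  induction m with
  | zero => intro j; simp [Rset, Cseq]
  | succ m ih =>
    intro j
    ext ω
    simp only [Rset, Cseq, Set.mem_iUnion, Set.mem_inter_iff, Set.mem_setOf_eq,
      Set.mem_preimage]
    refine exists_congr fun k => ?_
    refine exists_congr fun hk => and_congr ?_ ?_
    · rw [sum_Xinc S j k ω, sub_eq_zero]
    · rw [ih (j+k)]
      have : (fun (i : ℕ) => Xinc S (j+(k+i)) ω) = (fun i => Xinc S (j+k+i) ω) := by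
        funext i; rw [← add_assoc]
      simp only [Set.mem_preimage, this]

end SiltAux2

section SiltAux3
set_option linter.unusedSectionVars false

variable {Ω : Type*} [MeasurableSpace Ω] {V : Type*} [MeasurableSpace V]
  [AddCommGroup V] [MeasurableSub₂ V] [MeasurableAdd₂ V] [MeasurableSingletonClass V]
  {μ : Measure Ω} [IsProbabilityMeasure μ]

/-- padding a finite block to a sequence by zeros -/
def pad (L : ℕ) : (Fin L → V) → (ℕ → V) := fun v i => if h : i < L then v ⟨i, h⟩ else 0

lemma pad_measurable (L : ℕ) : Measurable (pad (V := V) L) := by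
  refine measurable_pi_lambda _ fun i => ?_
  by_cases h : i < L
  · simp only [pad, dif_pos h]; exact measurable_pi_apply _
  · simp only [pad, dif_neg h]; exact measurable_const

lemma seq_preimage_eq_blk_preimage {X : ℕ → Ω → V} (t m j : ℕ) :
    (fun ω (i : ℕ) => X (j+i) ω) ⁻¹' Cseq t m
      = blk X j (m*t) ⁻¹' (pad (m*t) ⁻¹' Cseq t m) := by
  ext ω
  simp only [Set.mem_preimage]
  refine (Cseq_agree t m _ _ fun i hi => ?_)
  simp only [pad, blk, dif_pos hi]

lemma Rset_measurableSet (S : ℕ → Ω → V) (hX : ∀ k, Measurable (Xinc S k))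
    (t m j : ℕ) : MeasurableSet (Rset S t m j) := by
  rw [Rset_eq, seq_preimage_eq_blk_preimage]
  exact blk_measurable hX j (m*t) ((pad_measurable (m*t)) (Cseq_measurableSet t m))

lemma Rset_measure_eq (S : ℕ → Ω → V) (hX : ∀ k, Measurable (Xinc S k))
    (hindep : iIndepFun (Xinc S) μ)
    (hident : ∀ k, IdentDistrib (Xinc S k) (Xinc S 0) μ μ) (t m j : ℕ) :
    μ (Rset S t m j) = μ (Rset S t m 0) := by
  rw [Rset_eq, Rset_eq, seq_preimage_eq_blk_preimage, seq_preimage_eq_blk_preimage]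
  exact blk_measure_preimage_eq hX hindep hident j (m*t)
    ((pad_measurable (m*t)) (Cseq_measurableSet t m))

lemma blk_indepFun {X : ℕ → Ω → V} (hX : ∀ k, Measurable (X k))
    (hindep : iIndepFun X μ) (k L : ℕ) :
    IndepFun (blk X 0 k) (blk X k L) μ := by
  classical
  have hdisj : Disjoint (Finset.range k) ((Finset.range L).map (addLeftEmbedding k)) := by
    rw [Finset.disjoint_left]
    intro a ha hb
    rw [Finset.mem_range] at ha
    rw [Finset.mem_map] at hb
    obtain ⟨b, _, hb⟩ := hb
    rw [addLeftEmbedding_apply] at hb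
    omega
  have h := hindep.indepFun_finset (Finset.range k)
    ((Finset.range L).map (addLeftEmbedding k)) hdisj hX
  set φ : (∀ _ : ↥(Finset.range k), V) → (Fin k → V) :=
    fun v i => v ⟨(i : ℕ), Finset.mem_range.mpr i.isLt⟩ with hφ
  set ψ : (∀ _ : ↥((Finset.range L).map (addLeftEmbedding k)), V) → (Fin L → V) :=
    fun v i => v ⟨k + (i : ℕ), by
      rw [Finset.mem_map]
      exact ⟨(i : ℕ), Finset.mem_range.mpr i.isLt, addLeftEmbedding_apply k i⟩⟩ with hψ
  have hφm : Measurable φ := measurable_pi_lambda _ fun i => measurable_pi_apply _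
  have hψm : Measurable ψ := measurable_pi_lambda _ fun i => measurable_pi_apply _
  have h2 := h.comp hφm hψm
  have e1 : φ ∘ (fun a (i : ↥(Finset.range k)) => X i a) = blk X 0 k := by
    funext a i
    simp only [Function.comp_apply, hφ, blk, Nat.zero_add]
  have e2 : ψ ∘ (fun a (i : ↥((Finset.range L).map (addLeftEmbedding k))) => X i a)
      = blk X k L := by
    funext a i
    simp only [Function.comp_apply, hψ, blk]
  rwa [e1, e2] at h2

end SiltAux3

section SiltAux4
set_option linter.unusedSectionVars false

variable {Ω : Type*} [MeasurableSpace Ω] {V : Type*} [MeasurableSpace V]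
  [AddCommGroup V] [MeasurableSub₂ V] [MeasurableAdd₂ V] [MeasurableSingletonClass V]
  {μ : Measure Ω} [IsProbabilityMeasure μ]

/-- first return to `0` at time exactly `k`, as a set of increment sequences -/
def Hret (k : ℕ) : Set (ℕ → V) :=
  {x | (∑ i ∈ Finset.range k, x i) = 0 ∧ ∀ m ∈ Finset.Ico 1 k, (∑ i ∈ Finset.range m, x i) ≠ 0}

lemma Hret_measurableSet (k : ℕ) : MeasurableSet (Hret k : Set (ℕ → V)) := by
  have hsum : ∀ m : ℕ, Measurable fun x : ℕ → V => ∑ i ∈ Finset.range m, x i := fun m =>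
    Finset.measurable_sum _ fun i _ => measurable_pi_apply i
  have h1 : MeasurableSet {x : ℕ → V | (∑ i ∈ Finset.range k, x i) = 0} :=
    (hsum k) (measurableSet_eq (a := (0 : V)))
  have h2 : MeasurableSet {x : ℕ → V |
      ∀ m ∈ Finset.Ico 1 k, (∑ i ∈ Finset.range m, x i) ≠ 0} := by
    rw [show {x : ℕ → V | ∀ m ∈ Finset.Ico 1 k, (∑ i ∈ Finset.range m, x i) ≠ 0}
      = ⋂ m ∈ Finset.Ico 1 k, {x : ℕ → V | (∑ i ∈ Finset.range m, x i) = 0}ᶜ by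
        ext x; simp]
    exact MeasurableSet.biInter (Finset.countable_toSet _) fun m _ =>
      ((hsum m) (measurableSet_eq (a := (0 : V)))).compl
  exact h1.inter h2

def Fret (S : ℕ → Ω → V) (k : ℕ) : Set Ω :=
  {ω | S k ω = 0 ∧ ∀ m, 1 ≤ m → m < k → S m ω ≠ 0}

lemma S_eq_sum {S : ℕ → Ω → V} (h0 : ∀ ω, S 0 ω = 0) (m : ℕ) (ω : Ω) :
    ∑ i ∈ Finset.range m, Xinc S i ω = S m ω := by
  have h := sum_Xinc S 0 m ω
  simpa [h0 ω] using h

lemma Fret_eq {S : ℕ → Ω → V} (h0 : ∀ ω, S 0 ω = 0) (k : ℕ) :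
    Fret S k = blk (Xinc S) 0 k ⁻¹' (pad k ⁻¹' Hret k) := by
  ext ω
  have hsum : ∀ m, m ≤ k →
      ∑ i ∈ Finset.range m, pad k (blk (Xinc S) 0 k ω) i = S m ω := by
    intro m hm
    rw [← S_eq_sum h0 m ω]
    refine Finset.sum_congr rfl fun i hi => ?_
    rw [Finset.mem_range] at hi
    have hik : i < k := lt_of_lt_of_le hi hm
    simp only [pad, blk, dif_pos hik, Nat.zero_add]
  simp only [Fret, Set.mem_preimage, Hret, Set.mem_setOf_eq]
  rw [hsum k le_rfl]
  constructor
  · rintro ⟨h1, h2⟩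
    refine ⟨h1, fun m hm => ?_⟩
    rw [Finset.mem_Ico] at hm
    rw [hsum m (le_of_lt hm.2)]
    exact h2 m hm.1 hm.2
  · rintro ⟨h1, h2⟩
    refine ⟨h1, fun m h1m h2m => ?_⟩
    have := h2 m (Finset.mem_Ico.mpr ⟨h1m, h2m⟩)
    rwa [hsum m (le_of_lt h2m)] at this

lemma Fret_disjoint (S : ℕ → Ω → V) : ∀ k k', 1 ≤ k → k < k' →
    Disjoint (Fret S k) (Fret S k') := by
  intro k k' hk hkk'
  rw [Set.disjoint_left]
  rintro ω ⟨h1, _⟩ ⟨_, h4⟩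
  exact h4 k hk hkk' h1

lemma Fret_union (S : ℕ → Ω → V) (t : ℕ) :
    ⋃ k ∈ Finset.Icc 1 t, Fret S k = {ω | ∃ k, 1 ≤ k ∧ k ≤ t ∧ S k ω = 0} := by
  ext ω
  simp only [Set.mem_iUnion, Finset.mem_Icc, Fret, Set.mem_setOf_eq]
  constructor
  · rintro ⟨k, hk, h1, _⟩
    exact ⟨k, hk.1, hk.2, h1⟩
  · rintro ⟨k, hk1, hk2, hk0⟩
    have hex : ∃ m, 1 ≤ m ∧ m ≤ t ∧ S m ω = 0 := ⟨k, hk1, hk2, hk0⟩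
    classical
    have hP : ∃ m, (fun m => 1 ≤ m ∧ m ≤ t ∧ S m ω = 0) m := hex
    refine ⟨Nat.find hP, ⟨(Nat.find_spec hP).1, (Nat.find_spec hP).2.1⟩,
      (Nat.find_spec hP).2.2, fun m hm1 hm2 hm0 => ?_⟩
    exact Nat.find_min hP hm2 ⟨hm1, le_trans (le_of_lt hm2) (Nat.find_spec hP).2.1, hm0⟩

end SiltAux4

section SiltAux5
set_option linter.unusedSectionVars false

variable {Ω : Type*} [MeasurableSpace Ω] {V : Type*} [MeasurableSpace V]
  [AddCommGroup V] [MeasurableSub₂ V] [MeasurableAdd₂ V] [MeasurableSingletonClass V]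
  {μ : Measure Ω} [IsProbabilityMeasure μ]

lemma Fret_measurableSet {S : ℕ → Ω → V} (h0 : ∀ ω, S 0 ω = 0)
    (hX : ∀ k, Measurable (Xinc S k)) (k : ℕ) : MeasurableSet (Fret S k) := by
  rw [Fret_eq h0 k]
  exact blk_measurable hX 0 k ((pad_measurable k) (Hret_measurableSet k))

lemma key_pow_le {S : ℕ → Ω → V} (hmeasS : ∀ k, Measurable (S k)) (h0 : ∀ ω, S 0 ω = 0)
    (hindep : iIndepFun (Xinc S) μ)
    (hident : ∀ k, IdentDistrib (Xinc S k) (Xinc S 0) μ μ) (t : ℕ) :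
    ∀ m, μ {ω | ∃ k, 1 ≤ k ∧ k ≤ t ∧ S k ω = 0} ^ m ≤ μ (Rset S t m 0) := by
  have hX : ∀ k, Measurable (Xinc S k) := fun k => (hmeasS _).sub (hmeasS _)
  set A : Set Ω := {ω | ∃ k, 1 ≤ k ∧ k ≤ t ∧ S k ω = 0} with hA
  intro m
  induction m with
  | zero => simp [Rset]
  | succ m ih =>
    -- decomposition of A into first-return events
    have hdisj : (↑(Finset.Icc 1 t) : Set ℕ).PairwiseDisjoint (Fret S) := by
      intro k hk k' hk' hne
      simp only [Finset.coe_Icc, Set.mem_Icc] at hk hk'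
      rcases lt_or_gt_of_ne hne with h | h
      · exact Fret_disjoint S k k' hk.1 h
      · exact (Fret_disjoint S k' k hk'.1 h).symm
    have hAdecomp : μ A = ∑ k ∈ Finset.Icc 1 t, μ (Fret S k) := by
      rw [hA, ← Fret_union S t]
      exact measure_biUnion_finset hdisj fun k _ => Fret_measurableSet h0 hX k
    -- independence: μ (Fret k ∩ Rset m k) = μ (Fret k) * μ (Rset m k)
    have hprod : ∀ k, μ (Fret S k ∩ Rset S t m k) = μ (Fret S k) * μ (Rset S t m k) := by
      intro k
      rw [Fret_eq h0 k, Rset_eq, seq_preimage_eq_blk_preimage]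
      exact (blk_indepFun hX hindep k (m*t)).measure_inter_preimage_eq_mul _ _
        ((pad_measurable k) (Hret_measurableSet k))
        ((pad_measurable (m*t)) (Cseq_measurableSet t m))
    have hcup : μ (⋃ k ∈ Finset.Icc 1 t, (Fret S k ∩ Rset S t m k))
        = ∑ k ∈ Finset.Icc 1 t, μ (Fret S k ∩ Rset S t m k) := by
      refine measure_biUnion_finset ?_ fun k _ => (Fret_measurableSet h0 hX k).inter
        (Rset_measurableSet S hX t m k)
      intro k hk k' hk' hne
      simp only [Finset.coe_Icc, Set.mem_Icc] at hk hk'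
      have : Disjoint (Fret S k) (Fret S k') := by
        rcases lt_or_gt_of_ne hne with h | h
        · exact Fret_disjoint S k k' hk.1 h
        · exact (Fret_disjoint S k' k hk'.1 h).symm
      exact (this.mono Set.inter_subset_left Set.inter_subset_left)
    have hsub : (⋃ k ∈ Finset.Icc 1 t, (Fret S k ∩ Rset S t m k)) ⊆ Rset S t (m+1) 0 := by
      show _ ⊆ ⋃ k ∈ Finset.Icc 1 t, ({ω | S (0+k) ω = S 0 ω} ∩ Rset S t m (0+k))
      refine Set.iUnion₂_mono fun k hk => Set.inter_subset_inter ?_ ?_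
      · intro ω hω
        simp only [Set.mem_setOf_eq, Nat.zero_add, h0 ω]
        exact hω.1
      · rw [Nat.zero_add]
    calc μ A ^ (m+1) = μ A * μ A ^ m := by ring
    _ ≤ μ A * μ (Rset S t m 0) := by gcongr
    _ = ∑ k ∈ Finset.Icc 1 t, μ (Fret S k) * μ (Rset S t m 0) := by
        rw [hAdecomp, Finset.sum_mul]
    _ = ∑ k ∈ Finset.Icc 1 t, μ (Fret S k ∩ Rset S t m k) := by
        refine Finset.sum_congr rfl fun k _ => ?_
        rw [hprod k, Rset_measure_eq S hX hindep hident t m k]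
    _ = μ (⋃ k ∈ Finset.Icc 1 t, (Fret S k ∩ Rset S t m k)) := hcup.symm
    _ ≤ μ (Rset S t (m+1) 0) := measure_mono hsub

end SiltAux5

section SiltAux6
set_option linter.unusedSectionVars false

variable {Ω : Type*} [MeasurableSpace Ω] {V : Type*} [MeasurableSpace V]
  [AddCommGroup V] [MeasurableSub₂ V] [MeasurableAdd₂ V] [MeasurableSingletonClass V]
  {μ : Measure Ω} [IsProbabilityMeasure μ]

open Classical in
lemma Rset_card (S : ℕ → Ω → V) (t : ℕ) : ∀ m j (ω : Ω), ω ∈ Rset S t m j →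
    m ≤ ((Finset.Icc (j+1) (j+m*t)).filter (fun i => S i ω = S j ω)).card := by
  intro m
  induction m with
  | zero => intro j ω _; simp
  | succ m ih =>
    intro j ω hω
    simp only [Rset, Set.mem_iUnion, Finset.mem_Icc] at hω
    obtain ⟨k, ⟨hk1, hk2⟩, hSk, hR⟩ := hω
    have ihc := ih (j+k) ω hR
    have hSk' : S (j+k) ω = S j ω := hSk
    have hfe : (Finset.Icc (j+k+1) (j+k+m*t)).filter (fun i => S i ω = S (j+k) ω)
        = (Finset.Icc (j+k+1) (j+k+m*t)).filter (fun i => S i ω = S j ω) :=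
      Finset.filter_congr (fun i _ => by rw [hSk'])
    rw [hfe] at ihc
    have hsub : insert (j+k) ((Finset.Icc (j+k+1) (j+k+m*t)).filter (fun i => S i ω = S j ω))
        ⊆ (Finset.Icc (j+1) (j+(m+1)*t)).filter (fun i => S i ω = S j ω) := by
      intro a ha
      rw [Finset.mem_insert] at ha
      rcases ha with rfl | ha
      · refine Finset.mem_filter.mpr ⟨Finset.mem_Icc.mpr ⟨by omega, ?_⟩, hSk⟩
        have : (m+1)*t = m*t + t := Nat.succ_mul m t
        omega
      · rw [Finset.mem_filter, Finset.mem_Icc] at ha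
        refine Finset.mem_filter.mpr ⟨Finset.mem_Icc.mpr ⟨by omega, ?_⟩, ha.2⟩
        have : (m+1)*t = m*t + t := Nat.succ_mul m t
        omega
    have hnotmem : (j+k) ∉ (Finset.Icc (j+k+1) (j+k+m*t)).filter (fun i => S i ω = S j ω) := by
      rw [Finset.mem_filter, Finset.mem_Icc]
      omega
    calc m + 1 ≤ ((Finset.Icc (j+k+1) (j+k+m*t)).filter (fun i => S i ω = S j ω)).card + 1 := by
          omega
    _ = (insert (j+k) ((Finset.Icc (j+k+1) (j+k+m*t)).filter (fun i => S i ω = S j ω))).card := by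
          rw [Finset.card_insert_of_notMem hnotmem]
    _ ≤ _ := Finset.card_le_card hsub

end SiltAux6

section SiltAux7
set_option linter.unusedSectionVars false

variable {Ω : Type*} [MeasurableSpace Ω] {V : Type*} [MeasurableSpace V]
  [AddCommGroup V] [MeasurableSub₂ V] [MeasurableAdd₂ V] [MeasurableSingletonClass V]
  [DecidableEq V] {μ : Measure Ω} [IsProbabilityMeasure μ]

lemma part1 {S : ℕ → Ω → V} (hmeasS : ∀ k, Measurable (S k)) (h0 : ∀ ω, S 0 ω = 0)
    (hindep : iIndepFun (Xinc S) μ)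
    (hident : ∀ k, IdentDistrib (Xinc S k) (Xinc S 0) μ μ)
    {y : ℝ} (hy : 0 < y) (n : ℕ) (hn : 1 ≤ n) :
    μ {ω | ∃ k : ℕ, 1 ≤ k ∧ (k : ℝ) ≤ (n : ℝ) / Real.sqrt ((n : ℝ) * y) ∧ S k ω = 0}
        ^ (⌈Real.sqrt ((n : ℝ) * y)⌉₊)
      ≤ μ {ω | (n : ℝ) * y ≤ ∑ x ∈ (Finset.range (n + 1)).image (fun k => S k ω),
          ((((Finset.range (n + 1)).filter (fun j => S j ω = x)).card : ℝ)) ^ 2} := by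
  set m := ⌈Real.sqrt ((n : ℝ) * y)⌉₊ with hmdef
  set t := ⌊(n : ℝ) / Real.sqrt ((n : ℝ) * y)⌋₊ with htdef
  have hny : 0 < (n : ℝ) * y := by positivity
  have hs : 0 < Real.sqrt ((n : ℝ) * y) := Real.sqrt_pos.mpr hny
  have hm1 : 1 ≤ m := Nat.ceil_pos.mpr hs
  have hAeq : {ω : Ω | ∃ k : ℕ, 1 ≤ k ∧ (k : ℝ) ≤ (n : ℝ) / Real.sqrt ((n : ℝ) * y) ∧ S k ω = 0}
      = {ω | ∃ k, 1 ≤ k ∧ k ≤ t ∧ S k ω = 0} := by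
    ext ω
    simp only [Set.mem_setOf_eq]
    constructor
    · rintro ⟨k, h1, h2, h3⟩; exact ⟨k, h1, Nat.le_floor h2, h3⟩
    · rintro ⟨k, h1, h2, h3⟩
      exact ⟨k, h1, le_trans (Nat.cast_le.mpr h2) (Nat.floor_le (by positivity)), h3⟩
  -- arithmetic: (m-1) * t ≤ n
  have hm1r : ((m - 1 : ℕ) : ℝ) ≤ Real.sqrt ((n : ℝ) * y) := by
    have h := Nat.ceil_lt_add_one (le_of_lt hs)
    rw [Nat.cast_sub hm1]
    push_cast
    linarith
  have htr : (t : ℝ) ≤ (n : ℝ) / Real.sqrt ((n : ℝ) * y) := Nat.floor_le (by positivity)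
  have hmt : (m - 1) * t ≤ n := by
    have h1 : ((m - 1 : ℕ) : ℝ) * (t : ℝ)
        ≤ Real.sqrt ((n : ℝ) * y) * ((n : ℝ) / Real.sqrt ((n : ℝ) * y)) :=
      mul_le_mul hm1r htr (Nat.cast_nonneg t) (le_of_lt hs)
    rw [mul_div_cancel₀ _ (ne_of_gt hs)] at h1
    exact_mod_cast h1
  -- inclusion of the return event in the SILT event
  have hincl : Rset S t (m - 1) 0 ⊆ {ω : Ω | (n : ℝ) * y ≤
      ∑ x ∈ (Finset.range (n + 1)).image (fun k => S k ω),
        ((((Finset.range (n + 1)).filter (fun j => S j ω = x)).card : ℝ)) ^ 2} := by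
    classical
    intro ω hω
    have hcard := Rset_card S t (m - 1) 0 ω hω
    simp only [Nat.zero_add, h0 ω] at hcard
    -- hcard : m - 1 ≤ card (Icc 1 ((m-1)*t)).filter (fun i => S i ω = 0)
    have hins : insert 0 ((Finset.Icc 1 ((m - 1) * t)).filter (fun i => S i ω = 0))
        ⊆ (Finset.range (n + 1)).filter (fun j => S j ω = 0) := by
      intro a ha
      rw [Finset.mem_insert] at ha
      rcases ha with rfl | ha
      · exact Finset.mem_filter.mpr ⟨Finset.mem_range.mpr (by omega), h0 ω⟩
      · rw [Finset.mem_filter, Finset.mem_Icc] at ha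
        exact Finset.mem_filter.mpr ⟨Finset.mem_range.mpr (by omega), ha.2⟩
    have h0notin : (0 : ℕ) ∉ (Finset.Icc 1 ((m - 1) * t)).filter (fun i => S i ω = 0) := by
      rw [Finset.mem_filter, Finset.mem_Icc]; omega
    have hcard2 : m ≤ ((Finset.range (n + 1)).filter (fun j => S j ω = 0)).card := by
      calc m = (m - 1) + 1 := by omega
      _ ≤ ((Finset.Icc 1 ((m - 1) * t)).filter (fun i => S i ω = 0)).card + 1 := by omega
      _ = (insert 0 ((Finset.Icc 1 ((m - 1) * t)).filter (fun i => S i ω = 0))).card :=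
          (Finset.card_insert_of_notMem h0notin).symm
      _ ≤ _ := Finset.card_le_card hins
    have hmem0 : (0 : V) ∈ (Finset.range (n + 1)).image (fun k => S k ω) :=
      Finset.mem_image.mpr ⟨0, Finset.mem_range.mpr (by omega), h0 ω⟩
    have hterm : ((n : ℝ) * y) ≤
        ((((Finset.range (n + 1)).filter (fun j => S j ω = (0 : V))).card : ℝ)) ^ 2 := by
      have h1 : Real.sqrt ((n : ℝ) * y) ≤ (m : ℝ) := Nat.le_ceil _
      have h2 : (m : ℝ) ≤ (((Finset.range (n + 1)).filter (fun j => S j ω = 0)).card : ℝ) :=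
        Nat.cast_le.mpr hcard2
      calc (n : ℝ) * y = Real.sqrt ((n : ℝ) * y) ^ 2 := (Real.sq_sqrt (le_of_lt hny)).symm
      _ ≤ _ := by
        apply pow_le_pow_left₀ (le_of_lt hs)
        exact le_trans h1 h2
    refine le_trans hterm ?_
    exact Finset.single_le_sum (f := fun x =>
      ((((Finset.range (n + 1)).filter (fun j => S j ω = x)).card : ℝ)) ^ 2)
      (fun x _ => sq_nonneg _) hmem0
  calc μ {ω : Ω | ∃ k : ℕ, 1 ≤ k ∧ (k : ℝ) ≤ (n : ℝ) / Real.sqrt ((n : ℝ) * y) ∧ S k ω = 0} ^ m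
      = μ {ω : Ω | ∃ k, 1 ≤ k ∧ k ≤ t ∧ S k ω = 0} ^ m := by rw [hAeq]
  _ ≤ μ {ω : Ω | ∃ k, 1 ≤ k ∧ k ≤ t ∧ S k ω = 0} ^ (m - 1) :=
      pow_le_pow_right_of_le_one' prob_le_one (Nat.sub_le m 1)
  _ ≤ μ (Rset S t (m - 1) 0) := key_pow_le hmeasS h0 hindep hident t (m - 1)
  _ ≤ _ := measure_mono hincl

end SiltAux7

section SiltAux8
set_option linter.unusedSectionVars false

variable {Ω : Type*} [MeasurableSpace Ω] {V : Type*} [MeasurableSpace V]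
  [AddCommGroup V] [MeasurableSub₂ V] [MeasurableAdd₂ V] [MeasurableSingletonClass V]
  {μ : Measure Ω} [IsProbabilityMeasure μ]

lemma pair_measure_eq {S : ℕ → Ω → V} (hmeasS : ∀ k, Measurable (S k)) (h0 : ∀ ω, S 0 ω = 0)
    (hindep : iIndepFun (Xinc S) μ)
    (hident : ∀ k, IdentDistrib (Xinc S k) (Xinc S 0) μ μ) {j k : ℕ} (hjk : j < k) :
    μ {ω | S k ω = S j ω} = μ {ω | S (k - j) ω = 0} := by
  have hX : ∀ k, Measurable (Xinc S k) := fun k => (hmeasS _).sub (hmeasS _)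
  set L := k - j with hL
  set D : Set (Fin L → V) := {v | (∑ i, v i) = 0} with hD
  have hDm : MeasurableSet D :=
    (Finset.measurable_sum _ fun i _ => measurable_pi_apply i)
      (measurableSet_eq (a := (0 : V)))
  have h1 : {ω : Ω | S k ω = S j ω} = blk (Xinc S) j L ⁻¹' D := by
    ext ω
    simp only [Set.mem_setOf_eq, Set.mem_preimage, hD, blk]
    rw [Fin.sum_univ_eq_sum_range (fun i => Xinc S (j + i) ω) L, sum_Xinc S j L ω,
      sub_eq_zero]
    have : j + L = k := by omega
    rw [this]
  have h2 : {ω : Ω | S L ω = 0} = blk (Xinc S) 0 L ⁻¹' D := by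
    ext ω
    simp only [Set.mem_setOf_eq, Set.mem_preimage, hD, blk]
    rw [Fin.sum_univ_eq_sum_range (fun i => Xinc S (0 + i) ω) L, sum_Xinc S 0 L ω,
      h0 ω, sub_zero, Nat.zero_add]
  rw [h1, h2]
  exact blk_measure_preimage_eq hX hindep hident j L hDm

lemma null_intersections {S : ℕ → Ω → V} (hmeasS : ∀ k, Measurable (S k))
    (h0 : ∀ ω, S 0 ω = 0)
    (hindep : iIndepFun (Xinc S) μ)
    (hident : ∀ k, IdentDistrib (Xinc S k) (Xinc S 0) μ μ)
    (hq0 : μ {ω | ∃ k : ℕ, 1 ≤ k ∧ S k ω = 0} = 0) :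
    μ {ω | ¬ ∀ j k : ℕ, j < k → S k ω ≠ S j ω} = 0 := by
  have hpair : ∀ j k : ℕ, j < k → μ {ω | S k ω = S j ω} = 0 := by
    intro j k hjk
    rw [pair_measure_eq hmeasS h0 hindep hident hjk]
    refine measure_mono_null ?_ hq0
    intro ω hω
    exact ⟨k - j, by omega, hω⟩
  refine measure_mono_null (fun ω hω => ?_)
    (measure_iUnion_null (s := fun j : ℕ => ⋃ k : ℕ, ⋃ _ : j < k, {ω : Ω | S k ω = S j ω})
      fun j => measure_iUnion_null fun k => measure_iUnion_null fun h => hpair j k h)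
  simp only [Set.mem_setOf_eq, not_forall] at hω
  obtain ⟨j, k, hjk, hne⟩ := hω
  simp only [Set.mem_iUnion, Set.mem_setOf_eq]
  exact ⟨j, k, hjk, not_not.mp hne⟩

end SiltAux8

section SiltAux9
set_option linter.unusedSectionVars false

variable {Ω : Type*} [MeasurableSpace Ω] {V : Type*} [MeasurableSpace V]
  [AddCommGroup V] [MeasurableSub₂ V] [MeasurableAdd₂ V] [MeasurableSingletonClass V]
  [DecidableEq V] {μ : Measure Ω} [IsProbabilityMeasure μ]

lemma silt_of_inj {S : ℕ → Ω → V} {ω : Ω} {n : ℕ}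
    (hinj : ∀ j k : ℕ, j < k → S k ω ≠ S j ω) :
    ∑ x ∈ (Finset.range (n + 1)).image (fun k => S k ω),
      ((((Finset.range (n + 1)).filter (fun j => S j ω = x)).card : ℝ)) ^ 2 = (n + 1 : ℝ) := by
  have hInjOn : Set.InjOn (fun k => S k ω) ↑(Finset.range (n + 1)) := by
    intro a _ b _ hab
    by_contra hne
    rcases lt_or_gt_of_ne hne with h | h
    · exact hinj a b h hab.symm
    · exact hinj b a h hab
  have hterm : ∀ x ∈ (Finset.range (n + 1)).image (fun k => S k ω),
      ((((Finset.range (n + 1)).filter (fun j => S j ω = x)).card : ℝ)) ^ 2 = 1 := by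
    intro x hx
    obtain ⟨k₀, hk₀, rfl⟩ := Finset.mem_image.mp hx
    have : (Finset.range (n + 1)).filter (fun j => S j ω = S k₀ ω) = {k₀} := by
      ext j
      simp only [Finset.mem_filter, Finset.mem_singleton]
      constructor
      · rintro ⟨hj, hjx⟩
        by_contra hne
        rcases lt_or_gt_of_ne hne with h | h
        · exact hinj j k₀ h hjx.symm
        · exact hinj k₀ j h hjx
      · rintro rfl; exact ⟨hk₀, rfl⟩
    rw [this]
    norm_num
  rw [Finset.sum_congr rfl hterm, Finset.sum_const, nsmul_eq_mul, mul_one,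
    Finset.card_image_of_injOn hInjOn, Finset.card_range]
  push_cast
  ring

lemma q0_term_zero {S : ℕ → Ω → V} (hmeasS : ∀ k, Measurable (S k)) (h0 : ∀ ω, S 0 ω = 0)
    (hindep : iIndepFun (Xinc S) μ)
    (hident : ∀ k, IdentDistrib (Xinc S k) (Xinc S 0) μ μ)
    (hq0 : μ {ω | ∃ k : ℕ, 1 ≤ k ∧ S k ω = 0} = 0) (y : ℝ) (n : ℕ) :
    Real.log (μ {ω | (n : ℝ) * y ≤ ∑ x ∈ (Finset.range (n + 1)).image (fun k => S k ω),
      ((((Finset.range (n + 1)).filter (fun j => S j ω = x)).card : ℝ)) ^ 2}).toReal = 0 := by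
  set E : Set Ω := {ω | ∀ j k : ℕ, j < k → S k ω ≠ S j ω} with hE
  have hEc : μ Eᶜ = 0 := by
    have := null_intersections hmeasS h0 hindep hident hq0
    refine measure_mono_null (fun ω hω => ?_) this
    simpa [hE] using hω
  by_cases h : (n : ℝ) * y ≤ (n + 1 : ℝ)
  · have hsub : E ⊆ {ω : Ω | (n : ℝ) * y ≤ ∑ x ∈ (Finset.range (n + 1)).image (fun k => S k ω),
        ((((Finset.range (n + 1)).filter (fun j => S j ω = x)).card : ℝ)) ^ 2} := by
      intro ω hω
      simp only [Set.mem_setOf_eq]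
      rw [silt_of_inj hω]
      exact h
    have h1 : (1 : ENNReal) ≤ μ E := by
      have := measure_union_le (μ := μ) E Eᶜ
      rw [Set.union_compl_self, measure_univ, hEc, add_zero] at this
      exact this
    have : μ {ω : Ω | (n : ℝ) * y ≤ ∑ x ∈ (Finset.range (n + 1)).image (fun k => S k ω),
        ((((Finset.range (n + 1)).filter (fun j => S j ω = x)).card : ℝ)) ^ 2} = 1 :=
      le_antisymm prob_le_one (le_trans h1 (measure_mono hsub))
    rw [this]
    simp
  · have hsub : {ω : Ω | (n : ℝ) * y ≤ ∑ x ∈ (Finset.range (n + 1)).image (fun k => S k ω),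
        ((((Finset.range (n + 1)).filter (fun j => S j ω = x)).card : ℝ)) ^ 2} ⊆ Eᶜ := by
      intro ω hω
      by_contra hcon
      rw [Set.notMem_compl_iff] at hcon
      rw [Set.mem_setOf_eq, silt_of_inj hcon] at hω
      exact h hω
    have : μ {ω : Ω | (n : ℝ) * y ≤ ∑ x ∈ (Finset.range (n + 1)).image (fun k => S k ω),
        ((((Finset.range (n + 1)).filter (fun j => S j ω = x)).card : ℝ)) ^ 2} = 0 :=
      measure_mono_null hsub hEc
    rw [this]
    simp

end SiltAux9

open scoped Topology ENNReal in
/-- Lower bound for the self-intersection local time of a transient random walk via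
repeated returns to the origin: `P(∑_x l_n(x)² ≥ ny) ≥ P(T₀ ≤ n/√(ny))^{⌈√(ny)⌉}`, and
consequently `liminf n^{-1/2} log P(∑_x l_n(x)² ≥ ny) ≥ √y log P(T₀ < ∞)`. -/
theorem silt_lower_bound_via_returns {Ω : Type*} [MeasurableSpace Ω] (μ : Measure Ω)
    [IsProbabilityMeasure μ] (d : ℕ) (hd : 3 ≤ d)
    (S : ℕ → Ω → (Fin d → ℤ)) (hmeas : ∀ k, Measurable (S k))
    (h0 : ∀ ω, S 0 ω = 0)
    (hindep : iIndepFun (fun k ω => S (k + 1) ω - S k ω) μ)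
    (hident : ∀ k, IdentDistrib (fun ω => S (k + 1) ω - S k ω)
        (fun ω => S 1 ω - S 0 ω) μ μ)
    (hq : μ {ω | ∃ k : ℕ, 1 ≤ k ∧ S k ω = 0} < 1)
    (y : ℝ) (hy : 0 < y) :
    (∀ n : ℕ, 1 ≤ n →
      μ {ω | ∃ k : ℕ, 1 ≤ k ∧ (k : ℝ) ≤ (n : ℝ) / Real.sqrt ((n : ℝ) * y) ∧ S k ω = 0}
          ^ (⌈Real.sqrt ((n : ℝ) * y)⌉₊)
        ≤ μ {ω | (n : ℝ) * y ≤ ∑ x ∈ (Finset.range (n + 1)).image (fun k => S k ω),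
            ((((Finset.range (n + 1)).filter (fun j => S j ω = x)).card : ℝ)) ^ 2})
    ∧ Real.sqrt y * Real.log (μ {ω | ∃ k : ℕ, 1 ≤ k ∧ S k ω = 0}).toReal
        ≤ atTop.liminf (fun n : ℕ =>
            (1 / Real.sqrt n) * Real.log
              (μ {ω | (n : ℝ) * y ≤ ∑ x ∈ (Finset.range (n + 1)).image (fun k => S k ω),
                ((((Finset.range (n + 1)).filter (fun j => S j ω = x)).card : ℝ)) ^ 2}).toReal) := by
  have hindep' : iIndepFun (Xinc S) μ := hindep
  have hident' : ∀ k, IdentDistrib (Xinc S k) (Xinc S 0) μ μ := hident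
  have hpart1 : ∀ n : ℕ, 1 ≤ n →
      μ {ω | ∃ k : ℕ, 1 ≤ k ∧ (k : ℝ) ≤ (n : ℝ) / Real.sqrt ((n : ℝ) * y) ∧ S k ω = 0}
          ^ (⌈Real.sqrt ((n : ℝ) * y)⌉₊)
        ≤ μ {ω | (n : ℝ) * y ≤ ∑ x ∈ (Finset.range (n + 1)).image (fun k => S k ω),
            ((((Finset.range (n + 1)).filter (fun j => S j ω = x)).card : ℝ)) ^ 2} :=
    fun n hn => part1 hmeas h0 hindep' hident' hy n hn
  refine ⟨hpart1, ?_⟩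
  by_cases hq0 : μ {ω | ∃ k : ℕ, 1 ≤ k ∧ S k ω = 0} = 0
  · rw [hq0]
    simp only [ENNReal.toReal_zero, Real.log_zero, mul_zero]
    have hterm : (fun n : ℕ =>
        (1 / Real.sqrt n) * Real.log
          (μ {ω | (n : ℝ) * y ≤ ∑ x ∈ (Finset.range (n + 1)).image (fun k => S k ω),
            ((((Finset.range (n + 1)).filter (fun j => S j ω = x)).card : ℝ)) ^ 2}).toReal)
        = fun _ : ℕ => (0 : ℝ) := by
      funext n
      rw [q0_term_zero hmeas h0 hindep' hident' hq0 y n, mul_zero]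
    rw [hterm, liminf_const]
  · -- positive return probability
    have hqtop : μ {ω | ∃ k : ℕ, 1 ≤ k ∧ S k ω = 0} ≠ ⊤ :=
      (hq.trans ENNReal.one_lt_top).ne
    -- the monotone family of events
    set A : ℕ → Set Ω := fun n =>
      {ω | ∃ k : ℕ, 1 ≤ k ∧ (k : ℝ) ≤ (n : ℝ) / Real.sqrt ((n : ℝ) * y) ∧ S k ω = 0} with hA
    have hdiv : ∀ n : ℕ, (n : ℝ) / Real.sqrt ((n : ℝ) * y) = Real.sqrt n / Real.sqrt y := by
      intro n
      rcases Nat.eq_zero_or_pos n with rfl | hn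
      · simp
      · rw [Real.sqrt_mul (Nat.cast_nonneg n) y, div_mul_eq_div_div, Real.div_sqrt]
    have hAmono : Monotone A := by
      intro a b hab ω hω
      obtain ⟨k, hk1, hk2, hk3⟩ := hω
      refine ⟨k, hk1, ?_, hk3⟩
      rw [hdiv a] at hk2
      rw [hdiv b]
      refine le_trans hk2 ?_
      exact div_le_div_of_nonneg_right (Real.sqrt_le_sqrt (Nat.cast_le.mpr hab))
        (Real.sqrt_nonneg y)
    have hAunion : (⋃ n, A n) = {ω | ∃ k : ℕ, 1 ≤ k ∧ S k ω = 0} := by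
      ext ω
      simp only [Set.mem_iUnion, hA, Set.mem_setOf_eq]
      constructor
      · rintro ⟨n, k, hk1, _, hk3⟩
        exact ⟨k, hk1, hk3⟩
      · rintro ⟨k, hk1, hk0⟩
        refine ⟨⌈(k : ℝ)^2 * y⌉₊, k, hk1, ?_, hk0⟩
        rw [hdiv]
        rw [le_div_iff₀ (Real.sqrt_pos.mpr hy)]
        have h1 : ((k : ℝ)^2 * y) ≤ (⌈(k : ℝ)^2 * y⌉₊ : ℝ) := Nat.le_ceil _
        have h2 : Real.sqrt ((k : ℝ)^2 * y) ≤ Real.sqrt (⌈(k : ℝ)^2 * y⌉₊ : ℝ) :=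
          Real.sqrt_le_sqrt h1
        rwa [Real.sqrt_mul (sq_nonneg _) y, Real.sqrt_sq (Nat.cast_nonneg k)] at h2
    have htendA : Tendsto (fun n => μ (A n)) atTop
        (𝓝 (μ {ω | ∃ k : ℕ, 1 ≤ k ∧ S k ω = 0})) := by
      rw [← hAunion]
      exact tendsto_measure_iUnion_atTop hAmono
    have hqposR : 0 < (μ {ω | ∃ k : ℕ, 1 ≤ k ∧ S k ω = 0}).toReal :=
      ENNReal.toReal_pos hq0 hqtop
    have hlog : Tendsto (fun n => Real.log (μ (A n)).toReal) atTop
        (𝓝 (Real.log (μ {ω | ∃ k : ℕ, 1 ≤ k ∧ S k ω = 0}).toReal)) :=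
      ((Real.continuousAt_log (ne_of_gt hqposR)).tendsto).comp
        ((ENNReal.tendsto_toReal hqtop).comp htendA)
    -- ratio tendsto
    have hsqrt0 : Tendsto (fun n : ℕ => 1 / Real.sqrt n) atTop (𝓝 0) := by
      have h1 : Tendsto (fun n : ℕ => Real.sqrt (1 / (n : ℝ))) atTop (𝓝 (Real.sqrt 0)) :=
        (Real.continuous_sqrt.tendsto 0).comp tendsto_one_div_atTop_nhds_zero_nat
      rw [Real.sqrt_zero] at h1
      refine h1.congr fun n => ?_
      rw [one_div, Real.sqrt_inv, one_div]
    have hratio : Tendsto (fun n : ℕ => (⌈Real.sqrt ((n : ℝ) * y)⌉₊ : ℝ) / Real.sqrt n)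
        atTop (𝓝 (Real.sqrt y)) := by
      have hupper : Tendsto (fun n : ℕ => Real.sqrt y + 1 / Real.sqrt n) atTop
          (𝓝 (Real.sqrt y)) := by
        have := tendsto_const_nhds (x := Real.sqrt y) (f := atTop (α := ℕ)) |>.add hsqrt0
        simpa using this
      refine tendsto_of_tendsto_of_tendsto_of_le_of_le' tendsto_const_nhds hupper ?_ ?_
      · filter_upwards [eventually_ge_atTop 1] with n hn
        have hsn : 0 < Real.sqrt n := Real.sqrt_pos.mpr (by exact_mod_cast hn)
        rw [le_div_iff₀ hsn]
        calc Real.sqrt y * Real.sqrt n = Real.sqrt ((n : ℝ) * y) := by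
              rw [Real.sqrt_mul (Nat.cast_nonneg n) y]; ring
        _ ≤ (⌈Real.sqrt ((n : ℝ) * y)⌉₊ : ℝ) := Nat.le_ceil _
      · filter_upwards [eventually_ge_atTop 1] with n hn
        have hsn : 0 < Real.sqrt n := Real.sqrt_pos.mpr (by exact_mod_cast hn)
        rw [div_le_iff₀ hsn]
        have hc : (⌈Real.sqrt ((n : ℝ) * y)⌉₊ : ℝ) < Real.sqrt ((n : ℝ) * y) + 1 :=
          Nat.ceil_lt_add_one (Real.sqrt_nonneg _)
        calc (⌈Real.sqrt ((n : ℝ) * y)⌉₊ : ℝ) ≤ Real.sqrt ((n : ℝ) * y) + 1 := le_of_lt hc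
        _ = Real.sqrt y * Real.sqrt n + 1 := by
              rw [Real.sqrt_mul (Nat.cast_nonneg n) y]; ring
        _ ≤ (Real.sqrt y + 1 / Real.sqrt n) * Real.sqrt n := by
              rw [add_mul, one_div, inv_mul_cancel₀ (ne_of_gt hsn)]
    set g : ℕ → ℝ := fun n =>
      ((⌈Real.sqrt ((n : ℝ) * y)⌉₊ : ℝ) / Real.sqrt n) * Real.log (μ (A n)).toReal with hg
    set h : ℕ → ℝ := fun n =>
      (1 / Real.sqrt n) * Real.log
        (μ {ω | (n : ℝ) * y ≤ ∑ x ∈ (Finset.range (n + 1)).image (fun k => S k ω),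
          ((((Finset.range (n + 1)).filter (fun j => S j ω = x)).card : ℝ)) ^ 2}).toReal
      with hh
    have hgt : Tendsto g atTop
        (𝓝 (Real.sqrt y * Real.log (μ {ω | ∃ k : ℕ, 1 ≤ k ∧ S k ω = 0}).toReal)) :=
      hratio.mul hlog
    -- eventual positivity of μ (A n)
    have hexN : ∃ N, μ (A N) ≠ 0 := by
      by_contra hcon
      push_neg at hcon
      have : μ {ω | ∃ k : ℕ, 1 ≤ k ∧ S k ω = 0} = 0 := by
        rw [← hAunion]
        exact measure_iUnion_null hcon
      exact hq0 this
    obtain ⟨N, hN⟩ := hexN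
    have hge : ∀ᶠ n in atTop, g n ≤ h n := by
      filter_upwards [eventually_ge_atTop (max N 1)] with n hn
      have hn1 : 1 ≤ n := le_trans (le_max_right N 1) hn
      have hAn0 : μ (A n) ≠ 0 := fun hzero => hN (le_antisymm
        (hzero ▸ measure_mono (hAmono (le_trans (le_max_left N 1) hn))) (by simp))
      have hAfin : μ (A n) ≠ ⊤ := measure_ne_top μ _
      have hApos : 0 < (μ (A n)).toReal := ENNReal.toReal_pos hAn0 hAfin
      set m := ⌈Real.sqrt ((n : ℝ) * y)⌉₊ with hm
      set Bn := {ω : Ω | (n : ℝ) * y ≤ ∑ x ∈ (Finset.range (n + 1)).image (fun k => S k ω),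
        ((((Finset.range (n + 1)).filter (fun j => S j ω = x)).card : ℝ)) ^ 2} with hBn
      have hle : μ (A n) ^ m ≤ μ Bn := hpart1 n hn1
      have hleR : (μ (A n)).toReal ^ m ≤ (μ Bn).toReal := by
        rw [← ENNReal.toReal_pow]
        exact ENNReal.toReal_mono (measure_ne_top μ _) hle
      have hlogle : (m : ℝ) * Real.log (μ (A n)).toReal ≤ Real.log (μ Bn).toReal := by
        rw [← Real.log_pow]
        exact Real.log_le_log (pow_pos hApos m) hleR
      have hsn : (0 : ℝ) ≤ 1 / Real.sqrt n := by positivity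
      calc g n = (1 / Real.sqrt n) * ((m : ℝ) * Real.log (μ (A n)).toReal) := by
            rw [hg]; ring
      _ ≤ (1 / Real.sqrt n) * Real.log (μ Bn).toReal :=
            mul_le_mul_of_nonneg_left hlogle hsn
      _ = h n := rfl
    have hbddg : IsBoundedUnder (· ≥ ·) atTop g := hgt.isBoundedUnder_ge
    have hcobh : IsCoboundedUnder (· ≥ ·) atTop h := by
      refine isCoboundedUnder_ge_of_eventually_le atTop (x := 0)
        (Eventually.of_forall fun n => ?_)
      have h1 : Real.log (μ {ω : Ω | (n : ℝ) * y ≤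
          ∑ x ∈ (Finset.range (n + 1)).image (fun k => S k ω),
          ((((Finset.range (n + 1)).filter (fun j => S j ω = x)).card : ℝ)) ^ 2}).toReal ≤ 0 :=
        Real.log_nonpos ENNReal.toReal_nonneg
          (ENNReal.toReal_mono ENNReal.one_ne_top prob_le_one)
      have h2 : (0 : ℝ) ≤ 1 / Real.sqrt n := by positivity
      calc h n ≤ (1 / Real.sqrt n) * 0 := mul_le_mul_of_nonneg_left h1 h2
      _ = 0 := mul_zero _
    calc Real.sqrt y * Real.log (μ {ω | ∃ k : ℕ, 1 ≤ k ∧ S k ω = 0}).toReal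
        = atTop.liminf g := hgt.liminf_eq.symm
    _ ≤ atTop.liminf h := liminf_le_liminf hge hbddg hcobh
end

section
/- Let η be a centered real random variable with log-Laplace transform Λ(t) = log E[exp(t η)] finite for all t ∈ ℝ, and suppose there are constants C₀, C_∞ such that Λ(t) ≤ C₀ t² for |t| ≤ 1 and Λ(t) ≤ C_∞ t^{α*} for t ≥ 1, with α* > 1. Let (η(x))_{x∈Λ} be i.i.d. copies over a finite set Λ, let (l(x))_{x∈Λ} be nonnegative reals with l(x) ≥ n^b for all x ∈ Λ (with b > 0, n ≥ 1), and suppose ∑_{x∈Λ} l(x)^{α*} ≤ n^{β - b + α* b} y₁ / (2 C_∞). Then P(∑_{x∈Λ} η(x) l(x) ≥ n^β y₁) ≤ exp(-n^{β-b} y₁ / 2). -/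
open MeasureTheory ProbabilityTheory Real

/-- Exponential Chebyshev bound on high level sets: if the common log-Laplace transform `Λ`
of the centered i.i.d. scenery satisfies `Λ(t) ≤ C₀ t²` for `|t| ≤ 1` and
`Λ(t) ≤ C_∞ t^{α*}` for `t ≥ 1`, `l(x) ≥ n^b` for all `x`, and
`∑ l(x)^{α*} ≤ n^{β-b+α*b} y₁/(2C_∞)`, then
`P(∑ η(x) l(x) ≥ n^β y₁) ≤ exp(-n^{β-b} y₁/2)`. -/
theorem rwrs_high_level_chebyshev {Ω : Type*} [MeasurableSpace Ω] (μ : Measure Ω)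
    [IsProbabilityMeasure μ] {ι : Type*} [Fintype ι]
    (η : ι → Ω → ℝ) (hmeas : ∀ x, Measurable (η x))
    (hindep : iIndepFun η μ)
    (hcent : ∀ x, ∫ ω, η x ω ∂μ = 0)
    (Λ : ℝ → ℝ) (hmgf : ∀ x (t : ℝ), ∫ ω, Real.exp (t * η x ω) ∂μ = Real.exp (Λ t))
    (C₀ Cinf : ℝ) (hCinf : 0 < Cinf)
    (hΛ₀ : ∀ t : ℝ, |t| ≤ 1 → Λ t ≤ C₀ * t ^ 2)
    (αs : ℝ) (hαs : 1 < αs)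
    (hΛinf : ∀ t : ℝ, 1 ≤ t → Λ t ≤ Cinf * t ^ αs)
    (n : ℕ) (hn : 1 ≤ n) (b β y₁ : ℝ) (hb : 0 < b) (hy₁ : 0 < y₁)
    (l : ι → ℝ) (hl : ∀ x, (n : ℝ) ^ b ≤ l x)
    (hsum : ∑ x, l x ^ αs ≤ (n : ℝ) ^ (β - b + αs * b) * y₁ / (2 * Cinf)) :
    μ {ω | (n : ℝ) ^ β * y₁ ≤ ∑ x, η x ω * l x}
      ≤ ENNReal.ofReal (Real.exp (-((n : ℝ) ^ (β - b) * y₁ / 2))) := by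
  classical
  have hn0 : (0 : ℝ) < (n : ℝ) := by exact_mod_cast Nat.lt_of_lt_of_le Nat.zero_lt_one hn
  set t : ℝ := (n : ℝ) ^ (-b) with ht_def
  have ht0 : 0 < t := Real.rpow_pos_of_pos hn0 _
  -- the scaled variables
  set X : ι → Ω → ℝ := fun x ω => η x ω * l x with hX_def
  have hXmeas : ∀ x, Measurable (X x) := fun x => (hmeas x).mul_const _
  have hXindep : iIndepFun X μ :=
    hindep.comp (fun x r => r * l x) (fun x => measurable_mul_const _)
  -- each t * l x ≥ 1
  have htl : ∀ x, 1 ≤ t * l x := by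
    intro x
    have h1 : t * (n : ℝ) ^ b ≤ t * l x :=
      mul_le_mul_of_nonneg_left (hl x) ht0.le
    have h2 : t * (n : ℝ) ^ b = 1 := by
      rw [ht_def, ← Real.rpow_add hn0]
      simp
    linarith
  -- integrability of exp(t * X x)
  have hrw : ∀ x, (fun ω => Real.exp (t * X x ω)) = fun ω => Real.exp ((t * l x) * η x ω) := by
    intro x; funext ω; rw [hX_def]; ring_nf
  have hint : ∀ x, Integrable (fun ω => Real.exp (t * X x ω)) μ := by
    intro x
    rw [hrw x]
    by_contra h
    have h0 := MeasureTheory.integral_undef h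
    rw [hmgf x (t * l x)] at h0
    exact (Real.exp_pos _).ne' h0
  -- mgf of each X x
  have hmgfX : ∀ x, mgf (X x) μ t = Real.exp (Λ (t * l x)) := by
    intro x
    rw [mgf, hrw x, hmgf x (t * l x)]
  -- sum bound on Λ
  have hΛsum : ∑ x, Λ (t * l x) ≤ (n : ℝ) ^ (β - b) * y₁ / 2 := by
    have h1 : ∀ x, Λ (t * l x) ≤ Cinf * (t ^ αs * l x ^ αs) := by
      intro x
      have := hΛinf (t * l x) (htl x)
      rwa [Real.mul_rpow ht0.le (le_trans (Real.rpow_pos_of_pos hn0 b).le (hl x))] at this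
    calc ∑ x, Λ (t * l x) ≤ ∑ x, Cinf * (t ^ αs * l x ^ αs) :=
          Finset.sum_le_sum fun x _ => h1 x
      _ = Cinf * t ^ αs * ∑ x, l x ^ αs := by rw [Finset.mul_sum]; ring_nf
      _ ≤ Cinf * t ^ αs * ((n : ℝ) ^ (β - b + αs * b) * y₁ / (2 * Cinf)) := by
          refine mul_le_mul_of_nonneg_left hsum ?_
          positivity
      _ = (n : ℝ) ^ (β - b) * y₁ / 2 := by
          rw [← Real.rpow_mul hn0.le]
          have : (n : ℝ) ^ (-(b * αs)) * ((n : ℝ) ^ (β - b + αs * b)) = (n : ℝ) ^ (β - b) := by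
            rw [← Real.rpow_add hn0]; ring_nf
          field_simp
          rw [← Real.rpow_add hn0]; ring_nf
  -- Chernoff bound
  have hintsum : Integrable (fun ω => Real.exp (t * (∑ x, X x) ω)) μ :=
    hXindep.integrable_exp_mul_sum hXmeas (fun x _ => hint x)
  have key := measure_ge_le_exp_mul_mgf (μ := μ) (X := ∑ x, X x)
    ((n : ℝ) ^ β * y₁) ht0.le hintsum
  have hset : {ω | (n : ℝ) ^ β * y₁ ≤ (∑ x, X x) ω}
      = {ω | (n : ℝ) ^ β * y₁ ≤ ∑ x, η x ω * l x} := by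
    ext ω; simp [Finset.sum_apply, hX_def]
  rw [hset] at key
  have hmgfsum : mgf (∑ x, X x) μ t = Real.exp (∑ x, Λ (t * l x)) := by
    rw [hXindep.mgf_sum hXmeas, Real.exp_sum]
    exact Finset.prod_congr rfl fun x _ => hmgfX x
  rw [hmgfsum] at key
  have htβ : -t * ((n : ℝ) ^ β * y₁) = -((n : ℝ) ^ (β - b) * y₁) := by
    rw [ht_def]
    have : (n : ℝ) ^ (-b) * (n : ℝ) ^ β = (n : ℝ) ^ (β - b) := by
      rw [← Real.rpow_add hn0]; ring_nf
    calc -(n : ℝ) ^ (-b) * ((n : ℝ) ^ β * y₁)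
        = -((n : ℝ) ^ (-b) * (n : ℝ) ^ β * y₁) := by ring
      _ = -((n : ℝ) ^ (β - b) * y₁) := by rw [this]
  rw [htβ, ← Real.exp_add] at key
  have hfinal : (μ {ω | (n : ℝ) ^ β * y₁ ≤ ∑ x, η x ω * l x}).toReal
      ≤ Real.exp (-((n : ℝ) ^ (β - b) * y₁ / 2)) := by
    refine key.trans (Real.exp_le_exp.mpr ?_)
    linarith [hΛsum]
  exact (ENNReal.le_ofReal_iff_toReal_le (measure_ne_top _ _) (Real.exp_pos _).le).mpr hfinal
end
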